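/- arXiv:1304.0808 — 2 statements merged into one kernel-verified Lean document; each statement's English description precedes it below -/
import Mathlib

section
/- Let X be a metric space and ε > 0. If α = {x₀,...,xₙ} is an ε-chain (i.e., d(x_i, x_{i+1}) < ε for all i) and β = {x₀ = y₀,...,yₙ = xₙ} is a sequence of points with the same endpoints such that max_i d(x_i, y_i) < E(α)/2, where E(α) := min_i (ε - d(x_i, x_{i+1})), then β is also an ε-chain and β is ε-homotopic to α. -/
noncomputable section
open Metric

variable {X : Type*} [MetricSpace X]

def IsEpsChain (ε : ℝ) (l : List X) : Prop :=
  l ≠ [] ∧ l.Chain' (fun a b => dist a b < ε)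

def chainLength : List X → ℝ
  | a :: b :: t => dist a b + chainLength (b :: t)
  | _ => 0

def conc (α β : List X) : List X := α ++ β.tail

def Insertion (α β : List X) : Prop :=
  ∃ (p s : List X) (x : X), p ≠ [] ∧ s ≠ [] ∧ α = p ++ s ∧ β = p ++ x :: s

def Move (ε : ℝ) (α β : List X) : Prop :=
  IsEpsChain ε α ∧ IsEpsChain ε β ∧ (Insertion α β ∨ Insertion β α)

def EpsHomotopic (ε : ℝ) : List X → List X → Prop :=
  Relation.ReflTransGen (Move ε)

def IsEpsNull (ε : ℝ) (l : List X) : Prop := ∃ x, EpsHomotopic ε l [x]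

def IsGeodesicSpace (Y : Type*) [MetricSpace Y] : Prop :=
  ∀ x y : Y, ∃ γ : ℝ → Y, γ 0 = x ∧ γ (dist x y) = y ∧
    ∀ s ∈ Set.Icc (0:ℝ) (dist x y), ∀ t ∈ Set.Icc (0:ℝ) (dist x y),
      dist (γ s) (γ t) = |s - t|

def ChainConnected (Y : Type*) [MetricSpace Y] : Prop :=
  ∀ ε > (0:ℝ), ∀ x y : Y, ∃ l : List Y, IsEpsChain ε l ∧ l.head? = some x ∧ l.getLast? = some y

theorem epsHomotopic_equiv (ε : ℝ) : Equivalence (EpsHomotopic (X := X) ε) := by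
  refine ⟨fun _ => Relation.ReflTransGen.refl, ?_, fun h h' => h.trans h'⟩
  intro a b h
  induction h with
  | refl => exact Relation.ReflTransGen.refl
  | tail _ hbc ih => exact Relation.ReflTransGen.head ⟨hbc.2.1, hbc.1, hbc.2.2.symm⟩ ih

/-- `E(α) = min_i (ε - d(x_i, x_{i+1}))`. -/
def chainE (ε : ℝ) (l : List X) : ℝ :=
  sInf {r | ∃ (i : ℕ) (h : i + 1 < l.length),
    r = ε - dist (l.get ⟨i, by omega⟩) (l.get ⟨i + 1, h⟩)}


lemma move_head {ε : ℝ} {a b : List X} (h : Move ε a b) : a.head? = b.head? := by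
  obtain ⟨_, _, hins⟩ := h
  rcases hins with ⟨p, s, x, hp, hs, rfl, rfl⟩ | ⟨p, s, x, hp, hs, rfl, rfl⟩ <;>
    cases p <;> simp_all

lemma homo_head {ε : ℝ} {a b : List X} (h : EpsHomotopic ε a b) : a.head? = b.head? := by
  induction h with
  | refl => rfl
  | tail _ hmove ih => exact ih.trans (move_head hmove)

lemma move_cons {ε : ℝ} {a b : List X} (c : X) (h : Move ε a b)
    (hc : ∀ y ∈ a.head?, dist c y < ε) : Move ε (c :: a) (c :: b) := by
  have hhead := move_head h
  obtain ⟨⟨ha1, ha2⟩, ⟨hb1, hb2⟩, hins⟩ := h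
  refine ⟨⟨by simp, List.isChain_cons.mpr ⟨hc, ha2⟩⟩,
    ⟨by simp, List.isChain_cons.mpr ⟨by rw [← hhead]; exact hc, hb2⟩⟩, ?_⟩
  rcases hins with ⟨p, s, x, hp, hs, h1, h2⟩ | ⟨p, s, x, hp, hs, h1, h2⟩
  · exact Or.inl ⟨c :: p, s, x, by simp, hs, by simp [h1], by simp [h2]⟩
  · exact Or.inr ⟨c :: p, s, x, by simp, hs, by simp [h1], by simp [h2]⟩

lemma homotopic_cons {ε : ℝ} {a b : List X} (c : X) (h : EpsHomotopic ε a b)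
    (hc : ∀ y ∈ a.head?, dist c y < ε) : EpsHomotopic ε (c :: a) (c :: b) := by
  induction h with
  | refl => exact .refl
  | tail hpre hmove ih =>
    exact ih.tail (move_cons c hmove (by rw [← homo_head hpre]; exact hc))

lemma key (ε e : ℝ) (hε : 0 < ε) (he : 0 < e) (hee : e ≤ ε) :
    ∀ (αt βt : List X) (p x v0 : X),
    dist p x < ε → dist p v0 < ε →
    (x :: αt).Chain' (fun a b => dist a b ≤ ε - e) →
    List.Forall₂ (fun u v => dist u v < e / 2) (x :: αt) (v0 :: βt) →
    (x :: αt).getLast? = (v0 :: βt).getLast? →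
    IsEpsChain ε (p :: v0 :: βt) ∧ EpsHomotopic ε (p :: x :: αt) (p :: v0 :: βt) := by
  intro αt
  induction αt with
  | nil =>
    intro βt p x v0 hpx hpv0 hA hC hlast
    rcases hC with _ | ⟨hxv, hnil⟩
    cases hnil
    simp at hlast
    subst hlast
    exact ⟨⟨by simp, List.isChain_pair.mpr hpx⟩, .refl⟩
  | cons x1 αt ih =>
    intro βt p x v0 hpx hpv0 hA hC hlast
    rcases hC with _ | ⟨hxv0, hC'⟩
    rcases hC' with _ | ⟨hx1v1, hC''⟩
    rename_i v1 βt'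
    have hAx : dist x x1 ≤ ε - e := (List.isChain_cons_cons.mp hA).1
    have hAt : (x1 :: αt).Chain' (fun a b => dist a b ≤ ε - e) := (List.isChain_cons_cons.mp hA).2
    have hchainα : (x :: x1 :: αt).Chain' (fun a b => dist a b < ε) :=
      hA.imp fun a b hab => by linarith
    have hchainαt : (x1 :: αt).Chain' (fun a b => dist a b < ε) :=
      hAt.imp fun a b hab => by linarith
    have dv0x : dist v0 x < ε := by rw [dist_comm]; linarith
    have dv0x1 : dist v0 x1 < ε := by
      have := dist_triangle v0 x x1
      rw [dist_comm v0 x] at this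
      linarith
    have dv0v1 : dist v0 v1 < ε := by
      have := dist_triangle4 v0 x x1 v1
      rw [dist_comm v0 x] at this
      linarith
    have chainC1 : IsEpsChain ε (p :: x :: x1 :: αt) :=
      ⟨by simp, List.isChain_cons_cons.mpr ⟨hpx, hchainα⟩⟩
    have chainC2 : IsEpsChain ε (p :: v0 :: x :: x1 :: αt) :=
      ⟨by simp, List.isChain_cons_cons.mpr ⟨hpv0, List.isChain_cons_cons.mpr ⟨dv0x, hchainα⟩⟩⟩
    have chainC3 : IsEpsChain ε (p :: v0 :: x1 :: αt) :=
      ⟨by simp, List.isChain_cons_cons.mpr ⟨hpv0, List.isChain_cons_cons.mpr ⟨dv0x1, hchainαt⟩⟩⟩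
    have move1 : Move ε (p :: x :: x1 :: αt) (p :: v0 :: x :: x1 :: αt) :=
      ⟨chainC1, chainC2, Or.inl ⟨[p], x :: x1 :: αt, v0, by simp, by simp, rfl, rfl⟩⟩
    have move2 : Move ε (p :: v0 :: x :: x1 :: αt) (p :: v0 :: x1 :: αt) :=
      ⟨chainC2, chainC3, Or.inr ⟨[p, v0], x1 :: αt, x, by simp, by simp, rfl, rfl⟩⟩
    have hlast' : (x1 :: αt).getLast? = (v1 :: βt').getLast? := by
      rw [← List.getLast?_cons_cons (a := x), ← List.getLast?_cons_cons (a := v0)]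
      exact hlast
    obtain ⟨hchainβ, hhomo⟩ := ih βt' v0 x1 v1 dv0x1 dv0v1 hAt
      (List.Forall₂.cons hx1v1 hC'') hlast'
    refine ⟨⟨by simp, List.isChain_cons_cons.mpr ⟨hpv0, hchainβ.2⟩⟩, ?_⟩
    exact (Relation.ReflTransGen.head move1 (Relation.ReflTransGen.head move2
      (homotopic_cons p hhomo (by simpa using hpv0))))

lemma chainE_facts (ε : ℝ) (l : List X) (h2 : 2 ≤ l.length)
    (hc : l.Chain' (fun a b => dist a b < ε)) :
    0 < chainE ε l ∧ chainE ε l ≤ ε ∧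
      l.Chain' (fun a b => dist a b ≤ ε - chainE ε l) := by
  set S : Set ℝ := {r | ∃ (i : ℕ) (h : i + 1 < l.length),
    r = ε - dist (l.get ⟨i, by omega⟩) (l.get ⟨i + 1, h⟩)} with hS
  have hdef : chainE ε l = sInf S := rfl
  have hchain : ∀ (i : ℕ) (h : i + 1 < l.length),
      dist (l.get ⟨i, by omega⟩) (l.get ⟨i + 1, h⟩) < ε := by
    intro i h
    exact List.isChain_iff_getElem.mp hc i (by omega)
  have hSne : S.Nonempty := by
    refine ⟨ε - dist (l.get ⟨0, by omega⟩) (l.get ⟨1, by omega⟩), 0, by omega, rfl⟩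
  have hSfin : S.Finite := by
    have hsub : S ⊆ Set.range (fun i : Fin (l.length - 1) =>
        ε - dist (l.get ⟨i, by omega⟩) (l.get ⟨i + 1, by omega⟩)) := by
      rintro r ⟨i, h, rfl⟩
      exact ⟨⟨i, by omega⟩, rfl⟩
    exact Set.Finite.subset (Set.finite_range _) hsub
  have hSbdd : BddBelow S := by
    refine ⟨0, ?_⟩
    rintro r ⟨i, h, rfl⟩
    have := hchain i h
    linarith
  have hSmem : sInf S ∈ S := hSne.csInf_mem hSfin
  rw [hdef]
  obtain ⟨i, h, hr⟩ := hSmem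
  refine ⟨by rw [hr]; have := hchain i h; linarith,
    by rw [hr]; have : (0:ℝ) ≤ dist (l.get ⟨i, by omega⟩) (l.get ⟨i+1, h⟩) := dist_nonneg
       linarith, ?_⟩
  refine List.isChain_iff_getElem.mpr ?_
  intro j hj
  have hmem : ε - dist (l.get ⟨j, by omega⟩) (l.get ⟨j + 1, by omega⟩) ∈ S :=
    ⟨j, by omega, rfl⟩
  have := csInf_le hSbdd hmem
  simp only [List.get_eq_getElem] at this
  linarith

/-- Uniformly close chains with the same endpoints are ε-homotopic. -/
theorem statement0 (ε : ℝ) (hε : 0 < ε) (α β : List X)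
    (hα : IsEpsChain ε α) (hlen : β.length = α.length)
    (hhead : β.head? = α.head?) (hlast : β.getLast? = α.getLast?)
    (hΔ : ∀ (i : ℕ) (hi : i < α.length),
      dist (α.get ⟨i, hi⟩) (β.get ⟨i, by omega⟩) < chainE ε α / 2) :
    IsEpsChain ε β ∧ EpsHomotopic ε α β := by
  rcases α with _ | ⟨x0, _ | ⟨x1, αt⟩⟩
  · exact absurd rfl hα.1
  · rcases β with _ | ⟨b, _ | ⟨v0, βt⟩⟩ <;> simp at hlen
    simp at hhead
    subst hhead
    exact ⟨hα, .refl⟩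
  · obtain ⟨he, hee, hA⟩ := chainE_facts ε (x0 :: x1 :: αt) (by simp) hα.2
    rcases β with _ | ⟨b, _ | ⟨v0, βt⟩⟩ <;> simp at hlen
    simp at hhead
    subst hhead
    have hC : List.Forall₂ (fun u v => dist u v < chainE ε (b :: x1 :: αt) / 2)
        (b :: x1 :: αt) (b :: v0 :: βt) := by
      rw [List.forall₂_iff_get]
      refine ⟨by simp; omega, fun i h1 h2 => hΔ i h1⟩
    rcases hC with _ | ⟨_, hC'⟩
    have hAx : dist b x1 ≤ ε - chainE ε (b :: x1 :: αt) := (List.isChain_cons_cons.mp hA).1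
    have hx1v0 : dist x1 v0 < chainE ε (b :: x1 :: αt) / 2 := by
      rcases hC' with _ | ⟨h, _⟩; exact h
    have d1 : dist b x1 < ε := by linarith
    have d2 : dist b v0 < ε := by
      have := dist_triangle b x1 v0
      linarith
    have hlast' : (x1 :: αt).getLast? = (v0 :: βt).getLast? := by
      rw [← List.getLast?_cons_cons (a := b), ← List.getLast?_cons_cons (a := b)]
      exact hlast.symm
    exact key ε (chainE ε (b :: x1 :: αt)) hε he hee αt βt b x1 v0 d1 d2
      (List.isChain_cons_cons.mp hA).2 hC' hlast'
end
end

section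
/- Suppose X and Y are metric spaces with groups H and K acting on X and Y respectively by isometries with closed orbits, φ : H → K is a surjective group homomorphism, and f : X → Y is a σ-isometry (for a first degree polynomial σ with non-negative coefficients) that is equivariant with respect to φ (i.e., f(h(x)) = φ(h)(f(x)) for all h ∈ H, x ∈ X). Then the induced map f_π : X/H → Y/K defined by f_π(Hx) = K f(x) is a σ-isometry with respect to the quotient metrics d(Hx, Hy) = inf{ d(x, h(y)) : h ∈ H }. -/
noncomputable section
open Metric

variable {X : Type*} [MetricSpace X]

/-- `f` is a σ-isometry for the first degree polynomial `σ(t) = m t + b`: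
distortion at most `σ`, and image a `σ(0)`-net. -/
def IsPolyIsometry {A B : Type*} [MetricSpace A] [MetricSpace B]
    (m c : ℝ) (f : A → B) : Prop :=
  (∀ x y : A, |dist x y - dist (f x) (f y)| ≤ m * dist x y + c) ∧
  ∀ z : B, ∃ w : A, dist z (f w) ≤ c

/-- The quotient pseudo-metric `d(Gx, Gy) = inf { d(x, g • y) : g ∈ G }`. -/
def qdist (G : Type*) [Group G] {A : Type*} [MetricSpace A] [MulAction G A]
    (x y : A) : ℝ :=
  sInf (Set.range fun g : G => dist x (g • y))

/-- An equivariant σ-isometry induces a σ-isometry of the quotients by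
isometric group actions with closed orbits. -/
theorem statement6 {Y : Type*} [MetricSpace Y] {H K : Type*} [Group H] [Group K]
    [MulAction H X] [MulAction K Y]
    (hH : ∀ (h : H) (x y : X), dist (h • x) (h • y) = dist x y)
    (hK : ∀ (k : K) (x y : Y), dist (k • x) (k • y) = dist x y)
    (hHc : ∀ x : X, IsClosed (MulAction.orbit H x))
    (hKc : ∀ y : Y, IsClosed (MulAction.orbit K y))
    (φ : H →* K) (hφ : Function.Surjective φ)
    (f : X → Y) (m c : ℝ) (hm : 0 ≤ m) (hc : 0 ≤ c)
    (hf : IsPolyIsometry m c f)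
    (heqv : ∀ (h : H) (x : X), f (h • x) = φ h • f x) :
    (∀ x y : X, |qdist H x y - qdist K (f x) (f y)| ≤ m * qdist H x y + c) ∧
    ∀ z : Y, ∃ w : X, qdist K z (f w) ≤ c := by
  constructor
  · intro x y
    have hSne : (Set.range fun h : H => dist x (h • y)).Nonempty := ⟨_, ⟨1, rfl⟩⟩
    have hSbd : BddBelow (Set.range fun h : H => dist x (h • y)) :=
      ⟨0, by rintro _ ⟨h, rfl⟩; exact dist_nonneg⟩
    have hTne : (Set.range fun k : K => dist (f x) (k • f y)).Nonempty := ⟨_, ⟨1, rfl⟩⟩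
    have hTbd : BddBelow (Set.range fun k : K => dist (f x) (k • f y)) :=
      ⟨0, by rintro _ ⟨k, rfl⟩; exact dist_nonneg⟩
    have hS0 : 0 ≤ qdist H x y :=
      le_csInf hSne (by rintro _ ⟨h, rfl⟩; exact dist_nonneg)
    have hT0 : 0 ≤ qdist K (f x) (f y) :=
      le_csInf hTne (by rintro _ ⟨k, rfl⟩; exact dist_nonneg)
    have hm1 : (0:ℝ) < 1 + m := by linarith
    -- upper bound: qdist K ≤ (1+m) * qdist H + c
    have h1 : qdist K (f x) (f y) ≤ (1 + m) * qdist H x y + c := by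
      refine le_of_forall_pos_le_add ?_
      intro ε hε
      obtain ⟨d, ⟨h, rfl⟩, hd⟩ := Real.lt_sInf_add_pos hSne (div_pos hε hm1)
      have key : dist (f x) (f (h • y)) ≤ (1 + m) * dist x (h • y) + c := by
        have := abs_le.mp (hf.1 x (h • y))
        linarith [this.1]
      have hmem : dist (f x) ((φ h) • f y) ∈ Set.range fun k : K => dist (f x) (k • f y) :=
        ⟨φ h, rfl⟩
      have h2 : qdist K (f x) (f y) ≤ dist (f x) (f (h • y)) := by
        rw [heqv]; exact csInf_le hTbd hmem
      have : (1 + m) * dist x (h • y) ≤ (1 + m) * (sInf (Set.range fun h : H => dist x (h • y)) + ε / (1 + m)) :=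
        mul_le_mul_of_nonneg_left (le_of_lt hd) (le_of_lt hm1)
      have heq : (1 + m) * (sInf (Set.range fun h : H => dist x (h • y)) + ε / (1 + m))
          = (1 + m) * qdist H x y + ε := by
        rw [mul_add, mul_div_cancel₀ _ (ne_of_gt hm1)]; rfl
      calc qdist K (f x) (f y) ≤ dist (f x) (f (h • y)) := h2
        _ ≤ (1 + m) * dist x (h • y) + c := key
        _ ≤ (1 + m) * qdist H x y + ε + c := by rw [← heq]; linarith
        _ = (1 + m) * qdist H x y + c + ε := by ring
    -- lower bound: qdist H ≤ qdist K + m * qdist H + c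
    have h2 : qdist H x y ≤ qdist K (f x) (f y) + m * qdist H x y + c := by
      rcases le_or_gt 1 m with hm' | hm'
      · nlinarith
      · have h1m : (0:ℝ) ≤ 1 - m := by linarith
        have hlow : (1 - m) * qdist H x y - c ≤ qdist K (f x) (f y) := by
          refine le_csInf hTne ?_
          rintro _ ⟨k, rfl⟩
          obtain ⟨h, rfl⟩ := hφ k
          show (1 - m) * qdist H x y - c ≤ dist (f x) (φ h • f y)
          rw [← heqv]
          have := abs_le.mp (hf.1 x (h • y))
          have hdS : qdist H x y ≤ dist x (h • y) := csInf_le hSbd ⟨h, rfl⟩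
          nlinarith [this.2]
        linarith
    rw [abs_sub_le_iff]
    constructor <;> linarith
  · intro z
    obtain ⟨w, hw⟩ := hf.2 z
    refine ⟨w, le_trans (csInf_le ⟨0, by rintro _ ⟨k, rfl⟩; exact dist_nonneg⟩
      ⟨1, ?_⟩) hw⟩
    simp
end
end
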